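/- arXiv:2206.11727 — 2 statements merged into one kernel-verified Lean document; each statement's English description precedes it below -/
import Mathlib

section
/- The function f(k) = -ln(1-√k)/k on (0,1) attains its minimum value c* ≈ 2.4554 at a unique point k* ≈ 0.5117; precisely, there exists a unique k* in (0,1) minimizing f, and f(k*) < 2.46 while f(k*) > 2.45. -/
open Real Set


noncomputable def phi (x : ℝ) : ℝ := x / (1 - x) + 2 * Real.log (1 - x)

lemma phi_hasDeriv {x : ℝ} (hx : x < 1) :
    HasDerivAt phi ((2 * x - 1) / (1 - x) ^ 2) x := by
  have h1 : (1 : ℝ) - x ≠ 0 := by linarith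
  have hd1 : HasDerivAt (fun y : ℝ => y / (1 - y)) (1 / (1 - x) ^ 2) x := by
    have := (hasDerivAt_id x).div ((hasDerivAt_id x).const_sub 1) h1
    refine this.congr_deriv ?_
    simp only [id_eq]
    field_simp
    try ring
  have hd2 : HasDerivAt (fun y : ℝ => Real.log (1 - y)) (-1 / (1 - x)) x :=
    ((hasDerivAt_id x).const_sub 1).log h1
  have := hd1.add (hd2.const_mul 2)
  refine this.congr_deriv ?_
  field_simp
  try ring

lemma log_285 : Real.log 0.285 < -(143 / 114 : ℝ) := by
  have h := Real.abs_log_sub_add_sum_range_le (x := -(0.14 : ℝ)) (by norm_num [abs_of_nonpos]) 4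
  rw [abs_le] at h
  have h2 : (0.285 : ℝ) = 1.14 / 2 ^ 2 := by norm_num
  have h3 : Real.log 0.285 = Real.log 1.14 - 2 * Real.log 2 := by
    rw [h2, Real.log_div (by norm_num) (by norm_num), Real.log_pow]
    norm_num
  have hl2 := Real.log_two_gt_d9
  have h14 : (1 : ℝ) - -(0.14) = 1.14 := by norm_num
  rw [h14] at h
  norm_num [Finset.sum_range_succ, abs_of_nonpos] at h
  rw [h3]
  nlinarith [h.2]

lemma log_284 : Real.log 0.284 > -(179 / 142 : ℝ) := by
  have h := Real.abs_log_sub_add_sum_range_le (x := -(0.136 : ℝ)) (by norm_num [abs_of_nonpos]) 4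
  rw [abs_le] at h
  have h2 : (0.284 : ℝ) = 1.136 / 2 ^ 2 := by norm_num
  have h3 : Real.log 0.284 = Real.log 1.136 - 2 * Real.log 2 := by
    rw [h2, Real.log_div (by norm_num) (by norm_num), Real.log_pow]
    norm_num
  have hl2 := Real.log_two_lt_d9
  have h14 : (1 : ℝ) - -(0.136) = 1.136 := by norm_num
  rw [h14] at h
  norm_num [Finset.sum_range_succ, abs_of_nonpos] at h
  rw [h3]
  nlinarith [h.1]




lemma phi_cont {s : Set ℝ} (hs : ∀ x ∈ s, x < 1) : ContinuousOn phi s := by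
  have h1 : ContinuousOn (fun x : ℝ => x / (1 - x)) s := by
    apply ContinuousOn.div continuousOn_id (by fun_prop)
    intro x hx
    have := hs x hx
    intro h; rw [sub_eq_zero] at h; linarith
  have h2 : ContinuousOn (fun x : ℝ => Real.log (1 - x)) s := by
    apply ContinuousOn.log (by fun_prop)
    intro x hx
    have := hs x hx
    intro h; rw [sub_eq_zero] at h; linarith
  exact h1.add (h2.const_smul (2:ℝ))

lemma phi_anti : StrictAntiOn phi (Icc 0 (1/2)) := by
  apply strictAntiOn_of_deriv_neg (convex_Icc _ _) (phi_cont (by intro x hx; simp at hx; linarith [hx.2]))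
  intro x hx
  rw [interior_Icc] at hx
  rw [(phi_hasDeriv (by linarith [hx.2] : x < 1)).deriv]
  apply div_neg_of_neg_of_pos
  · linarith [hx.1, hx.2]
  · have h1 : (0:ℝ) < 1 - x := by linarith [hx.2]
    positivity

lemma phi_mono : StrictMonoOn phi (Ico (1/2) 1) := by
  apply strictMonoOn_of_deriv_pos (convex_Ico _ _) (phi_cont (by intro x hx; exact hx.2))
  intro x hx
  rw [interior_Ico] at hx
  rw [(phi_hasDeriv hx.2).deriv]
  apply div_pos
  · linarith [hx.1]
  · have h1 : (0:ℝ) < 1 - x := by linarith [hx.2]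
    positivity

lemma phi_715 : phi 0.715 < 0 := by
  have := log_285
  have : phi 0.715 = 0.715 / 0.285 + 2 * Real.log 0.285 := by norm_num [phi]
  rw [this]
  nlinarith [log_285]

lemma phi_716 : phi 0.716 > 0 := by
  have : phi 0.716 = 0.716 / 0.284 + 2 * Real.log 0.284 := by norm_num [phi]
  rw [this]
  nlinarith [log_284]

lemma exists_xstar : ∃ x ∈ Ioo (0.715 : ℝ) 0.716, phi x = 0 := by
  have hc : ContinuousOn phi (Icc (0.715 : ℝ) 0.716) := phi_cont (by intro x hx; have := hx.2; norm_num at this ⊢; linarith)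
  have := intermediate_value_Ioo (by norm_num : (0.715:ℝ) ≤ 0.716) hc
  have h0 : (0:ℝ) ∈ Ioo (phi 0.715) (phi 0.716) := ⟨phi_715, phi_716⟩
  obtain ⟨x, hx, hphix⟩ := this h0
  exact ⟨x, hx, hphix⟩



noncomputable def F (k : ℝ) : ℝ := -Real.log (1 - Real.sqrt k) / k

lemma F_hasDeriv {k : ℝ} (hk : k ∈ Ioo (0:ℝ) 1) :
    HasDerivAt F (phi (Real.sqrt k) / (2 * k ^ 2)) k := by
  obtain ⟨hk0, hk1⟩ := hk
  set s := Real.sqrt k with hs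
  have hs0 : 0 < s := Real.sqrt_pos.2 hk0
  have hs1 : s < 1 := by
    rw [hs, show (1:ℝ) = Real.sqrt 1 by simp]
    exact Real.sqrt_lt_sqrt hk0.le hk1
  have h1s : (1:ℝ) - s ≠ 0 := by intro h; rw [sub_eq_zero] at h; linarith
  have hks : k = s * s := (Real.mul_self_sqrt hk0.le).symm
  have hsq : HasDerivAt Real.sqrt (1 / (2 * s)) k := Real.hasDerivAt_sqrt hk0.ne'
  have h1 : HasDerivAt (fun k : ℝ => 1 - Real.sqrt k) (-(1 / (2 * s))) k := hsq.const_sub 1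
  have h2 : HasDerivAt (fun k : ℝ => -Real.log (1 - Real.sqrt k)) (-(-(1 / (2 * s)) / (1 - s))) k := by
    have : (1:ℝ) - Real.sqrt k ≠ 0 := by rw [← hs]; exact h1s
    exact (h1.log this).neg
  have h3 := h2.div (hasDerivAt_id k) hk0.ne'
  refine h3.congr_deriv ?_
  simp only [phi, id_eq]
  have hL : -Real.log (1 - Real.sqrt k) = -Real.log (1 - s) := by rw [hs]
  rw [hL]
  rw [hks]
  field_simp
  ring





/-- The function `f k = -ln(1-√k)/k` on `(0,1)` attains its minimum at a unique
point `k*`, and the minimum value lies in `(2.45, 2.46)`. -/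
theorem ewma_constant_min :
    ∃ kstar ∈ Set.Ioo (0:ℝ) 1,
      (∀ k ∈ Set.Ioo (0:ℝ) 1,
        -Real.log (1 - Real.sqrt kstar) / kstar ≤ -Real.log (1 - Real.sqrt k) / k) ∧
      (∀ k ∈ Set.Ioo (0:ℝ) 1,
        (∀ k' ∈ Set.Ioo (0:ℝ) 1,
          -Real.log (1 - Real.sqrt k) / k ≤ -Real.log (1 - Real.sqrt k') / k') → k = kstar) ∧
      2.45 < -Real.log (1 - Real.sqrt kstar) / kstar ∧
      -Real.log (1 - Real.sqrt kstar) / kstar < 2.46 := by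
  obtain ⟨x, ⟨hx1, hx2⟩, hphix⟩ := exists_xstar
  have hx0 : (0:ℝ) < x := by norm_num at hx1 ⊢; linarith
  have hxlt1 : x < 1 := by norm_num at hx2 ⊢; linarith
  set ks := x ^ 2 with hks
  have hks0 : 0 < ks := by positivity
  have hks1 : ks < 1 := by nlinarith
  have hsqks : Real.sqrt ks = x := Real.sqrt_sq hx0.le
  -- phi sign
  have phi_neg : ∀ y : ℝ, 0 < y → y < x → phi y < 0 := by
    intro y hy0 hyx
    rcases le_or_gt y (1/2) with h | h
    · have h0 : phi 0 = 0 := by simp [phi]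
      have := phi_anti (by constructor <;> norm_num : (0:ℝ) ∈ Icc 0 (1/2))
        (by constructor <;> [linarith; linarith] : y ∈ Icc 0 (1/2)) hy0
      linarith [this, h0.symm ▸ this]
    · have hxm : x ∈ Ico (1/2:ℝ) 1 := ⟨by norm_num at hx1 ⊢; linarith, hxlt1⟩
      have := phi_mono ⟨h.le, by linarith⟩ hxm hyx
      rw [hphix] at this
      exact this
  have phi_pos : ∀ y : ℝ, x < y → y < 1 → 0 < phi y := by
    intro y hxy hy1
    have hxm : x ∈ Ico (1/2:ℝ) 1 := ⟨by norm_num at hx1 ⊢; linarith, hxlt1⟩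
    have := phi_mono hxm ⟨by norm_num at hx1 ⊢; linarith, hy1⟩ hxy
    rw [hphix] at this
    exact this
  -- F strict anti on Ioc 0 ks
  have hanti : StrictAntiOn F (Ioc 0 ks) := by
    apply strictAntiOn_of_deriv_neg (convex_Ioc _ _)
    · intro k hk
      exact (F_hasDeriv ⟨hk.1, lt_of_le_of_lt hk.2 hks1⟩).continuousAt.continuousWithinAt
    · intro k hk
      rw [interior_Ioc] at hk
      have hk0 : 0 < k := hk.1
      rw [(F_hasDeriv ⟨hk.1, lt_trans hk.2 hks1⟩).deriv]
      apply div_neg_of_neg_of_pos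
      · exact phi_neg _ (Real.sqrt_pos.2 hk.1) ((Real.sqrt_lt' hx0).2 hk.2)
      · positivity
  have hmono : StrictMonoOn F (Ico ks 1) := by
    apply strictMonoOn_of_deriv_pos (convex_Ico _ _)
    · intro k hk
      exact (F_hasDeriv ⟨lt_of_lt_of_le hks0 hk.1, hk.2⟩).continuousAt.continuousWithinAt
    · intro k hk
      rw [interior_Ico] at hk
      have hk0 : 0 < k := lt_trans hks0 hk.1
      rw [(F_hasDeriv ⟨hk0, hk.2⟩).deriv]
      apply div_pos
      · apply phi_pos
        · exact (Real.lt_sqrt hx0.le).2 hk.1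
        · rw [show (1:ℝ) = Real.sqrt 1 by simp]
          exact Real.sqrt_lt_sqrt hk0.le hk.2
      · positivity
  -- minimality
  have hmin : ∀ k ∈ Ioo (0:ℝ) 1, F ks ≤ F k := by
    intro k hk
    rcases lt_trichotomy k ks with h | h | h
    · exact (hanti ⟨hk.1, h.le⟩ ⟨hks0, le_refl _⟩ h).le
    · rw [h]
    · exact (hmono ⟨le_refl _, hks1⟩ ⟨h.le, hk.2⟩ h).le
  have hstrict : ∀ k ∈ Ioo (0:ℝ) 1, k ≠ ks → F ks < F k := by
    intro k hk hne
    rcases lt_trichotomy k ks with h | h | h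
    · exact hanti ⟨hk.1, h.le⟩ ⟨hks0, le_refl _⟩ h
    · exact absurd h hne
    · exact hmono ⟨le_refl _, hks1⟩ ⟨h.le, hk.2⟩ h
  -- value
  have h1x : (0:ℝ) < 1 - x := by linarith
  have hlog : Real.log (1 - x) = -x / (2 * (1 - x)) := by
    have := hphix
    simp only [phi] at this
    field_simp at this ⊢
    linarith
  have hval : F ks = 1 / (2 * x * (1 - x)) := by
    simp only [F, hsqks, hlog]
    field_simp
    ring
  have hlow : (2.45:ℝ) < F ks := by
    rw [hval, lt_div_iff₀ (by positivity)]
    nlinarith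
  have hhigh : F ks < (2.46:ℝ) := by
    rw [hval, div_lt_iff₀ (by positivity)]
    nlinarith
  refine ⟨ks, ⟨hks0, hks1⟩, ?_, ?_, hlow, hhigh⟩
  · exact hmin
  · intro k hk hmink
    by_contra hne
    have h1 := hstrict k hk hne
    have h2 := hmink ks ⟨hks0, hks1⟩
    have : F k ≤ F ks := h2
    linarith
end

section
/- Asymptotic equivalence of the ARL₀ integral: as B → ∞, ∫_0^B x^{-N/2} e^x (∫_0^x z^{N/2-1} e^{-z} dz) dx ~ Γ(N/2) · B^{-N/2} e^B, i.e., the ratio of the two sides tends to 1. -/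
open Filter MeasureTheory Set intervalIntegral

namespace ARLAux

/-- lower incomplete gamma -/
noncomputable def G (a x : ℝ) : ℝ := ∫ z in Set.Ioo (0:ℝ) x, z ^ (a-1) * Real.exp (-z)

lemma gamma_int {a : ℝ} (ha : 0 < a) :
    IntegrableOn (fun z : ℝ => z ^ (a-1) * Real.exp (-z)) (Ioi 0) := by
  have h := Real.GammaIntegral_convergent ha
  have : (fun z : ℝ => z ^ (a-1) * Real.exp (-z)) =
      fun z : ℝ => Real.exp (-z) * z ^ (a-1) := by ext z; ring
  rw [this]; exact h

lemma Gamma_eq {a : ℝ} (ha : 0 < a) :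
    Real.Gamma a = ∫ z in Ioi (0:ℝ), z ^ (a-1) * Real.exp (-z) := by
  rw [Real.Gamma_eq_integral ha]
  congr 1; ext z; ring

lemma G_mono {a : ℝ} (ha : 0 < a) : Monotone (G a) := by
  intro x y hxy
  apply setIntegral_mono_set
  · exact (gamma_int ha).mono_set Ioo_subset_Ioi_self
  · filter_upwards [ae_restrict_mem measurableSet_Ioo] with z hz
    have : (0:ℝ) < z := hz.1
    positivity
  · exact (Ioo_subset_Ioo_right hxy).eventuallyLE

lemma G_nonneg (a x : ℝ) : 0 ≤ G a x := by
  apply setIntegral_nonneg measurableSet_Ioo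
  intro z hz
  have : (0:ℝ) < z := hz.1
  positivity

lemma G_le_Gamma {a : ℝ} (ha : 0 < a) (x : ℝ) : G a x ≤ Real.Gamma a := by
  rw [Gamma_eq ha]
  apply setIntegral_mono_set (gamma_int ha)
  · filter_upwards [ae_restrict_mem measurableSet_Ioi] with z hz
    have : (0:ℝ) < z := hz
    positivity
  · exact Ioo_subset_Ioi_self.eventuallyLE

lemma G_tendsto {a : ℝ} (ha : 0 < a) : Tendsto (G a) atTop (nhds (Real.Gamma a)) := by
  have h := intervalIntegral_tendsto_integral_Ioi (μ := volume) 0 (gamma_int ha)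
    (tendsto_id (α := ℝ))
  rw [← Gamma_eq ha] at h
  apply h.congr'
  filter_upwards [eventually_ge_atTop (0:ℝ)] with x hx
  simp only [id_eq]
  rw [intervalIntegral.integral_of_le hx, integral_Ioc_eq_integral_Ioo]
  rfl

lemma G_le_rpow {a : ℝ} (ha : 0 < a) {x : ℝ} (hx : 0 ≤ x) : G a x ≤ x ^ a / a := by
  have h1 : G a x ≤ ∫ z in Ioo (0:ℝ) x, z ^ (a-1) := by
    apply setIntegral_mono_on
    · exact (gamma_int ha).mono_set Ioo_subset_Ioi_self
    · exact ((intervalIntegrable_rpow' (by linarith) (a := 0) (b := x)).1.mono_set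
        Ioo_subset_Ioc_self)
    · exact measurableSet_Ioo
    · intro z hz
      have hz0 : (0:ℝ) < z := hz.1
      nlinarith [Real.exp_le_one_iff.2 (by linarith : -z ≤ 0) , Real.rpow_pos_of_pos hz0 (a-1)]
  have h2 : ∫ z in Ioo (0:ℝ) x, z ^ (a-1) = x ^ a / a := by
    rw [← integral_Ioc_eq_integral_Ioo, ← intervalIntegral.integral_of_le hx,
      integral_rpow (Or.inl (by linarith))]
    rw [Real.zero_rpow (by linarith : a - 1 + 1 ≠ 0)]
    ring_nf
  linarith

/-- the integrand -/
noncomputable def f (a x : ℝ) : ℝ := x ^ (-a) * Real.exp x * G a x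

lemma f_nonneg (a : ℝ) {x : ℝ} (hx : 0 < x) : 0 ≤ f a x := by
  unfold f
  have h1 := G_nonneg a x
  positivity

lemma f_le_exp {a : ℝ} (ha : 0 < a) {x : ℝ} (hx : 0 < x) : f a x ≤ Real.exp x / a := by
  unfold f
  have h1 : G a x ≤ x ^ a / a := G_le_rpow ha hx.le
  have h2 : x ^ (-a) * Real.exp x * (x ^ a / a) = Real.exp x / a := by
    rw [Real.rpow_neg hx.le]
    field_simp
  calc x ^ (-a) * Real.exp x * G a x ≤ x ^ (-a) * Real.exp x * (x ^ a / a) := by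
        apply mul_le_mul_of_nonneg_left h1
        positivity
    _ = Real.exp x / a := h2

lemma f_le_Gamma {a : ℝ} (ha : 0 < a) {x : ℝ} (hx : 0 ≤ x) :
    f a x ≤ Real.Gamma a * (x ^ (-a) * Real.exp x) := by
  unfold f
  have h1 : G a x ≤ Real.Gamma a := G_le_Gamma ha x
  have h2 : (0:ℝ) ≤ x ^ (-a) * Real.exp x := by
    have := Real.rpow_nonneg hx (-a)
    positivity
  calc x ^ (-a) * Real.exp x * G a x ≤ x ^ (-a) * Real.exp x * Real.Gamma a :=
        mul_le_mul_of_nonneg_left h1 h2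
    _ = Real.Gamma a * (x ^ (-a) * Real.exp x) := by ring

lemma f_meas {a : ℝ} (ha : 0 < a) : Measurable (f a) := by
  have h1 : Measurable (fun x : ℝ => x ^ (-a) * Real.exp x) := by measurability
  exact h1.mul (G_mono ha).measurable

lemma f_intOn {a : ℝ} (ha : 0 < a) (B : ℝ) : IntegrableOn (f a) (Ioc 0 B) := by
  apply Integrable.mono' (g := fun _ => Real.exp B / a)
  · exact integrableOn_const measure_Ioc_lt_top.ne
  · exact (f_meas ha).aestronglyMeasurable
  · filter_upwards [ae_restrict_mem measurableSet_Ioc] with x hx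
    rw [Real.norm_eq_abs, abs_of_nonneg (f_nonneg a hx.1)]
    calc f a x ≤ Real.exp x / a := f_le_exp ha hx.1
      _ ≤ Real.exp B / a := by
          gcongr
          exact hx.2

lemma f_intervalInt {a : ℝ} (ha : 0 < a) {u v : ℝ} (hu : 0 ≤ u) (huv : u ≤ v) :
    IntervalIntegrable (f a) volume u v :=
  (intervalIntegrable_iff_integrableOn_Ioc_of_le huv).2
    ((f_intOn ha v).mono_set (Ioc_subset_Ioc hu le_rfl))


lemma root_le_half {B : ℝ} (hB : 4 ≤ B) : B ^ ((1:ℝ)/2) ≤ B / 2 := by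
  have hB0 : (0:ℝ) ≤ B := by linarith
  have hr0 : 0 ≤ B ^ ((1:ℝ)/2) := Real.rpow_nonneg hB0 _
  have hsq : (B ^ ((1:ℝ)/2)) ^ (2:ℕ) = B := by
    rw [← Real.rpow_natCast (B ^ ((1:ℝ)/2)) 2, ← Real.rpow_mul hB0]
    norm_num
  nlinarith [hsq, hr0]

lemma main {a : ℝ} (ha : 0 < a) :
    Tendsto (fun B : ℝ =>
        (∫ x in Set.Ioo (0:ℝ) B, x ^ (-a) * Real.exp x *
          ∫ z in Set.Ioo (0:ℝ) x, z ^ (a - 1) * Real.exp (-z))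
        / (Real.Gamma a * B ^ (-a) * Real.exp B)) atTop (nhds 1) := by
  have hΓ : 0 < Real.Gamma a := Real.Gamma_pos_of_pos ha
  show Tendsto (fun B : ℝ =>
      (∫ x in Set.Ioo (0:ℝ) B, f a x) / (Real.Gamma a * B ^ (-a) * Real.exp B))
    atTop (nhds 1)
  set L : ℝ → ℝ := fun B =>
    (G a (B/2) * (B ^ (-a) * (Real.exp B - Real.exp (B/2))))
      / (Real.Gamma a * B ^ (-a) * Real.exp B) with hLdef
  set U : ℝ → ℝ := fun B =>
    (Real.exp 1 / a + B * (Real.Gamma a * Real.exp (B - B ^ ((1:ℝ)/2)))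
      + Real.Gamma a * ((B - B ^ ((1:ℝ)/2)) ^ (-a) * Real.exp B))
      / (Real.Gamma a * B ^ (-a) * Real.exp B) with hUdef
  -- limit of L
  have hL : Tendsto L atTop (nhds 1) := by
    have h1 : Tendsto (fun B : ℝ => G a (B/2)) atTop (nhds (Real.Gamma a)) :=
      (G_tendsto ha).comp (tendsto_id.atTop_div_const two_pos)
    have h2 : Tendsto (fun B : ℝ => Real.exp (-(B/2))) atTop (nhds 0) :=
      Real.tendsto_exp_neg_atTop_nhds_zero.comp (tendsto_id.atTop_div_const two_pos)
    have h3 := (h1.mul ((tendsto_const_nhds (x := (1:ℝ))).sub h2)).div_const (Real.Gamma a)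
    have h4 : Real.Gamma a * (1 - 0) / Real.Gamma a = 1 := by field_simp; norm_num
    rw [h4] at h3
    apply h3.congr'
    filter_upwards [eventually_gt_atTop (0:ℝ)] with B hB0
    have hBa : (0:ℝ) < B ^ a := Real.rpow_pos_of_pos hB0 a
    have hE : (0:ℝ) < Real.exp B := Real.exp_pos B
    have hE2 : (0:ℝ) < Real.exp (B/2) := Real.exp_pos _
    rw [hLdef]
    simp only
    rw [show -(B/2) = B/2 - B by ring, Real.exp_sub, Real.rpow_neg hB0.le,
      div_eq_div_iff hΓ.ne' (by positivity)]
    field_simp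
  -- limit of U
  have hU : Tendsto U atTop (nhds 1) := by
    have t1 : Tendsto (fun B : ℝ =>
        Real.exp 1 / a / Real.Gamma a * (B ^ a * Real.exp (-B))) atTop (nhds 0) := by
      have h := tendsto_rpow_mul_exp_neg_mul_atTop_nhds_zero a 1 one_pos
      simp only [neg_mul, one_mul] at h
      simpa using h.const_mul (Real.exp 1 / a / Real.Gamma a)
    have t2 : Tendsto (fun B : ℝ =>
        B * B ^ a * Real.exp (-(B ^ ((1:ℝ)/2)))) atTop (nhds 0) := by
      have h := tendsto_rpow_mul_exp_neg_mul_atTop_nhds_zero (2*(a+1)) 1 one_pos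
      simp only [neg_mul, one_mul] at h
      have h2 := h.comp (tendsto_rpow_atTop (by norm_num : (0:ℝ) < 1/2))
      apply h2.congr'
      filter_upwards [eventually_gt_atTop (0:ℝ)] with B hB0
      simp only [Function.comp_apply]
      rw [← Real.rpow_mul hB0.le, show (1:ℝ)/2 * (2*(a+1)) = a + 1 by ring,
        Real.rpow_add_one hB0.ne' a]
      ring
    have t3 : Tendsto (fun B : ℝ =>
        (B - B ^ ((1:ℝ)/2)) ^ (-a) * B ^ a) atTop (nhds 1) := by
      have inner0 : Tendsto (fun B : ℝ => 1 - B ^ (-((1:ℝ)/2))) atTop (nhds 1) := by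
        have h := tendsto_rpow_neg_atTop (by norm_num : (0:ℝ) < 1/2)
        simpa using tendsto_const_nhds.sub h
      have inner : Tendsto (fun B : ℝ => (B - B ^ ((1:ℝ)/2)) / B) atTop (nhds 1) := by
        apply inner0.congr'
        filter_upwards [eventually_gt_atTop (0:ℝ)] with B hB0
        rw [sub_div, div_self hB0.ne']
        congr 1
        rw [show -((1:ℝ)/2) = (1:ℝ)/2 - 1 by norm_num, Real.rpow_sub hB0, Real.rpow_one]
      have comp := ((Real.continuousAt_rpow_const 1 (-a) (Or.inl one_ne_zero)).tendsto).comp inner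
      rw [Real.one_rpow] at comp
      apply comp.congr'
      filter_upwards [eventually_ge_atTop (4:ℝ)] with B hB4
      have hB0 : (0:ℝ) < B := by linarith
      have hs0 : (0:ℝ) < B - B ^ ((1:ℝ)/2) := by
        have := root_le_half hB4; linarith
      simp only [Function.comp_apply]
      rw [Real.rpow_neg (div_nonneg hs0.le hB0.le), Real.div_rpow hs0.le hB0.le,
        Real.rpow_neg hs0.le]
      have h1 : ((B - B ^ ((1:ℝ)/2)) ^ a) ≠ 0 := (Real.rpow_pos_of_pos hs0 a).ne'
      have h2 : (B ^ a) ≠ 0 := (Real.rpow_pos_of_pos hB0 a).ne'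
      field_simp
    have hsum := (t1.add t2).add t3
    rw [show (0:ℝ) + 0 + 1 = 1 by ring] at hsum
    apply hsum.congr'
    filter_upwards [eventually_ge_atTop (4:ℝ)] with B hB4
    have hB0 : (0:ℝ) < B := by linarith
    have hs0 : (0:ℝ) < B - B ^ ((1:ℝ)/2) := by
      have := root_le_half hB4; linarith
    have hBa : (0:ℝ) < B ^ a := Real.rpow_pos_of_pos hB0 a
    have hsa : (0:ℝ) < (B - B ^ ((1:ℝ)/2)) ^ a := Real.rpow_pos_of_pos hs0 a
    have hE : (0:ℝ) < Real.exp B := Real.exp_pos B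
    have hEr : (0:ℝ) < Real.exp (B ^ ((1:ℝ)/2)) := Real.exp_pos _
    rw [hUdef]
    simp only
    rw [Real.exp_sub, Real.exp_neg, Real.exp_neg, Real.rpow_neg hB0.le a,
      Real.rpow_neg hs0.le a]
    field_simp
  -- lower bound
  have hlow : ∀ᶠ B in atTop, L B ≤
      (∫ x in Set.Ioo (0:ℝ) B, f a x) / (Real.Gamma a * B ^ (-a) * Real.exp B) := by
    filter_upwards [eventually_ge_atTop (4:ℝ)] with B hB4
    have hB0 : (0:ℝ) < B := by linarith
    have hBna : (0:ℝ) < B ^ (-a) := Real.rpow_pos_of_pos hB0 _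
    have hD : (0:ℝ) < Real.Gamma a * B ^ (-a) * Real.exp B := by positivity
    have hIoo : IntegrableOn (f a) (Set.Ioo 0 B) := (f_intOn ha B).mono_set Ioo_subset_Ioc_self
    have step1 : (∫ x in Set.Ioo (B/2) B, f a x) ≤ ∫ x in Set.Ioo (0:ℝ) B, f a x :=
      setIntegral_mono_set hIoo
        ((ae_restrict_mem measurableSet_Ioo).mono fun x hx => f_nonneg a hx.1)
        ((Ioo_subset_Ioo (by linarith) le_rfl).eventuallyLE)
    have step2 : (∫ x in Set.Ioo (B/2) B, G a (B/2) * B ^ (-a) * Real.exp x)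
        ≤ ∫ x in Set.Ioo (B/2) B, f a x := by
      apply setIntegral_mono_on
      · exact ((continuous_const.mul Real.continuous_exp).integrableOn_Icc).mono_set
          Ioo_subset_Icc_self
      · exact hIoo.mono_set (Ioo_subset_Ioo (by linarith) le_rfl)
      · exact measurableSet_Ioo
      · intro x hx
        have hx0 : (0:ℝ) < x := lt_trans (by linarith) hx.1
        have hG : G a (B/2) ≤ G a x := G_mono ha hx.1.le
        have hrp : B ^ (-a) ≤ x ^ (-a) :=
          Real.rpow_le_rpow_of_nonpos hx0 hx.2.le (neg_nonpos.2 ha.le)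
        show G a (B/2) * B ^ (-a) * Real.exp x ≤ f a x
        unfold f
        calc G a (B/2) * B ^ (-a) * Real.exp x ≤ G a x * x ^ (-a) * Real.exp x := by
              apply mul_le_mul_of_nonneg_right _ (Real.exp_nonneg x)
              exact mul_le_mul hG hrp (Real.rpow_nonneg hB0.le _) (G_nonneg a x)
          _ = x ^ (-a) * Real.exp x * G a x := by ring
    have step3 : (∫ x in Set.Ioo (B/2) B, G a (B/2) * B ^ (-a) * Real.exp x)
        = G a (B/2) * B ^ (-a) * (Real.exp B - Real.exp (B/2)) := by
      rw [MeasureTheory.integral_const_mul]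
      congr 1
      rw [← integral_Ioc_eq_integral_Ioo, ← intervalIntegral.integral_of_le
        (by linarith : B/2 ≤ B), integral_exp]
    have key : G a (B/2) * (B ^ (-a) * (Real.exp B - Real.exp (B/2)))
        ≤ ∫ x in Set.Ioo (0:ℝ) B, f a x := by
      calc G a (B/2) * (B ^ (-a) * (Real.exp B - Real.exp (B/2)))
          = G a (B/2) * B ^ (-a) * (Real.exp B - Real.exp (B/2)) := by ring
        _ = ∫ x in Set.Ioo (B/2) B, G a (B/2) * B ^ (-a) * Real.exp x := step3.symm
        _ ≤ ∫ x in Set.Ioo (B/2) B, f a x := step2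
        _ ≤ ∫ x in Set.Ioo (0:ℝ) B, f a x := step1
    rw [hLdef]
    simp only
    exact (div_le_div_iff_of_pos_right hD).2 key
  -- upper bound
  have hup : ∀ᶠ B in atTop,
      (∫ x in Set.Ioo (0:ℝ) B, f a x) / (Real.Gamma a * B ^ (-a) * Real.exp B) ≤ U B := by
    filter_upwards [eventually_ge_atTop (4:ℝ)] with B hB4
    have hB0 : (0:ℝ) < B := by linarith
    have hrB := root_le_half hB4
    have hr0 : (0:ℝ) ≤ B ^ ((1:ℝ)/2) := Real.rpow_nonneg hB0.le _
    have hs0 : (0:ℝ) < B - B ^ ((1:ℝ)/2) := by linarith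
    have h1s : (1:ℝ) ≤ B - B ^ ((1:ℝ)/2) := by linarith
    have hsB : B - B ^ ((1:ℝ)/2) ≤ B := by linarith
    have hBna : (0:ℝ) < B ^ (-a) := Real.rpow_pos_of_pos hB0 _
    have hD : (0:ℝ) < Real.Gamma a * B ^ (-a) * Real.exp B := by positivity
    have hsplit : (∫ x in Set.Ioo (0:ℝ) B, f a x)
        = (∫ x in (0:ℝ)..1, f a x) + (∫ x in (1:ℝ)..(B - B ^ ((1:ℝ)/2)), f a x)
          + (∫ x in (B - B ^ ((1:ℝ)/2))..B, f a x) := by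
      rw [← integral_Ioc_eq_integral_Ioo,
        ← intervalIntegral.integral_of_le (by linarith : (0:ℝ) ≤ B),
        intervalIntegral.integral_add_adjacent_intervals
          (f_intervalInt ha le_rfl zero_le_one) (f_intervalInt ha zero_le_one h1s),
        intervalIntegral.integral_add_adjacent_intervals
          (f_intervalInt ha le_rfl (by linarith)) (f_intervalInt ha hs0.le hsB)]
    have b1 : (∫ x in (0:ℝ)..1, f a x) ≤ Real.exp 1 / a := by
      have h := intervalIntegral.integral_mono_on zero_le_one
        (f_intervalInt ha le_rfl zero_le_one) intervalIntegrable_const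
        (g := fun _ => Real.exp 1 / a) ?_
      · simpa using h
      · intro x hx
        rcases eq_or_lt_of_le hx.1 with h0 | h0
        · rw [← h0]
          unfold f
          rw [Real.zero_rpow (neg_ne_zero.2 ha.ne')]
          simp
          positivity
        · calc f a x ≤ Real.exp x / a := f_le_exp ha h0
            _ ≤ Real.exp 1 / a := by
                gcongr
                exact hx.2
    have b2 : (∫ x in (1:ℝ)..(B - B ^ ((1:ℝ)/2)), f a x)
        ≤ B * (Real.Gamma a * Real.exp (B - B ^ ((1:ℝ)/2))) := by
      have h := intervalIntegral.integral_mono_on h1s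
        (f_intervalInt ha zero_le_one h1s) intervalIntegrable_const
        (g := fun _ => Real.Gamma a * Real.exp (B - B ^ ((1:ℝ)/2))) ?_
      · simp only [intervalIntegral.integral_const, smul_eq_mul] at h
        have h2 : (B - B ^ ((1:ℝ)/2) - 1) * (Real.Gamma a * Real.exp (B - B ^ ((1:ℝ)/2)))
            ≤ B * (Real.Gamma a * Real.exp (B - B ^ ((1:ℝ)/2))) := by
          apply mul_le_mul_of_nonneg_right (by linarith) (by positivity)
        linarith
      · intro x hx
        have hx0 : (0:ℝ) < x := lt_of_lt_of_le one_pos hx.1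
        calc f a x ≤ Real.Gamma a * (x ^ (-a) * Real.exp x) := f_le_Gamma ha hx0.le
          _ ≤ Real.Gamma a * (1 * Real.exp (B - B ^ ((1:ℝ)/2))) := by
              apply mul_le_mul_of_nonneg_left _ hΓ.le
              exact mul_le_mul
                (Real.rpow_le_one_of_one_le_of_nonpos hx.1 (neg_nonpos.2 ha.le))
                (Real.exp_le_exp.2 hx.2) (Real.exp_nonneg x) zero_le_one
          _ = Real.Gamma a * Real.exp (B - B ^ ((1:ℝ)/2)) := by ring
    have b3 : (∫ x in (B - B ^ ((1:ℝ)/2))..B, f a x)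
        ≤ Real.Gamma a * ((B - B ^ ((1:ℝ)/2)) ^ (-a) * Real.exp B) := by
      have h := intervalIntegral.integral_mono_on hsB
        (f_intervalInt ha hs0.le hsB)
        ((continuous_const.mul (continuous_const.mul Real.continuous_exp)).intervalIntegrable _ _)
        (g := fun x => Real.Gamma a * ((B - B ^ ((1:ℝ)/2)) ^ (-a) * Real.exp x)) ?_
      · rw [intervalIntegral.integral_const_mul, intervalIntegral.integral_const_mul,
          integral_exp] at h
        have hsna : (0:ℝ) ≤ (B - B ^ ((1:ℝ)/2)) ^ (-a) := Real.rpow_nonneg hs0.le _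
        have hEs : (0:ℝ) < Real.exp (B - B ^ ((1:ℝ)/2)) := Real.exp_pos _
        calc (∫ x in (B - B ^ ((1:ℝ)/2))..B, f a x)
            ≤ Real.Gamma a * ((B - B ^ ((1:ℝ)/2)) ^ (-a)
                * (Real.exp B - Real.exp (B - B ^ ((1:ℝ)/2)))) := h
          _ ≤ Real.Gamma a * ((B - B ^ ((1:ℝ)/2)) ^ (-a) * Real.exp B) := by
              apply mul_le_mul_of_nonneg_left _ hΓ.le
              apply mul_le_mul_of_nonneg_left (by linarith) hsna
      · intro x hx
        have hx0 : (0:ℝ) < x := lt_of_lt_of_le hs0 hx.1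
        calc f a x ≤ Real.Gamma a * (x ^ (-a) * Real.exp x) := f_le_Gamma ha hx0.le
          _ ≤ Real.Gamma a * ((B - B ^ ((1:ℝ)/2)) ^ (-a) * Real.exp x) := by
              apply mul_le_mul_of_nonneg_left _ hΓ.le
              apply mul_le_mul_of_nonneg_right _ (Real.exp_nonneg x)
              exact Real.rpow_le_rpow_of_nonpos hs0 hx.1 (neg_nonpos.2 ha.le)
    have hsum : (∫ x in Set.Ioo (0:ℝ) B, f a x)
        ≤ Real.exp 1 / a + B * (Real.Gamma a * Real.exp (B - B ^ ((1:ℝ)/2)))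
          + Real.Gamma a * ((B - B ^ ((1:ℝ)/2)) ^ (-a) * Real.exp B) := by
      rw [hsplit]
      exact add_le_add (add_le_add b1 b2) b3
    rw [hUdef]
    simp only
    exact (div_le_div_iff_of_pos_right hD).2 hsum
  exact tendsto_of_tendsto_of_tendsto_of_le_of_le' hL hU hlow hup

end ARLAux

open ARLAux in
/-- Asymptotic equivalence of the ARL₀ integral:
`∫₀ᴮ x^{-N/2}e^x γ(N/2,x) dx ~ Γ(N/2) B^{-N/2} e^B` as `B → ∞`. -/
theorem arl_integral_asymptotics (N : ℝ) (hN : 0 < N) :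
    Tendsto (fun B : ℝ =>
        (∫ x in Set.Ioo (0:ℝ) B, x ^ (-(N/2)) * Real.exp x *
          ∫ z in Set.Ioo (0:ℝ) x, z ^ (N/2 - 1) * Real.exp (-z))
        / (Real.Gamma (N/2) * B ^ (-(N/2)) * Real.exp B))
      atTop (nhds 1) :=
  main (by linarith : 0 < N/2)
end
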